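/- For every positive integer γ, the sum Σ_{μ=0}^{γ−1} 1/(√(μ+1) · √(γ−μ)) is at most π. -/

import Mathlib

open Real Finset Set

/-- Uniform bound form of Lemma A2 of the paper: for every positive integer `γ`,
`∑_{μ=0}^{γ−1} 1/(√(μ+1)·√(γ−μ)) ≤ π`. -/
theorem lemma_A2_bound (γ : ℕ) (hγ : 0 < γ) :
    ∑ μ ∈ Finset.range γ,
        1 / (Real.sqrt ((μ : ℝ) + 1) * Real.sqrt ((γ : ℝ) - (μ : ℝ))) ≤ Real.pi := by
  have hg0 : (0:ℝ) < (γ:ℝ) := by exact_mod_cast hγ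
  set g : ℝ := (γ : ℝ) with hg
  set f : ℝ → ℝ := fun x => Real.arcsin ((2*x - g)/g) with hf
  have key : ∀ μ ∈ range γ,
      1 / (Real.sqrt ((μ:ℝ)+1) * Real.sqrt (g - (μ:ℝ))) ≤ f ((μ:ℝ)+1) - f (μ:ℝ) := by
    intro μ hμ
    have hμγ : (μ:ℝ) + 1 ≤ g := by
      have h := Finset.mem_range.mp hμ
      have h2 : ((μ:ℝ)) + 1 ≤ (γ:ℝ) := by exact_mod_cast Nat.succ_le_of_lt h
      rw [hg]; exact h2
    have hμ0 : (0:ℝ) ≤ (μ:ℝ) := Nat.cast_nonneg μ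
    have hderiv : ∀ x ∈ Set.Ioo ((μ:ℝ)) ((μ:ℝ)+1),
        HasDerivAt f (1 / Real.sqrt (x*(g-x))) x := by
      intro x hx
      have hx0 : 0 < x := lt_of_le_of_lt hμ0 hx.1
      have hxg : x < g := lt_of_lt_of_le hx.2 hμγ
      have hne1 : (2*x - g)/g ≠ 1 := by
        intro h; rw [div_eq_one_iff_eq (ne_of_gt hg0)] at h; linarith
      have hnem1 : (2*x - g)/g ≠ -1 := by
        intro h; rw [div_eq_iff (ne_of_gt hg0)] at h; nlinarith
      have hinner : HasDerivAt (fun y => (2*y - g)/g) (2/g) x := by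
        have h2 : HasDerivAt (fun y : ℝ => 2*y - g) 2 x := by
          simpa using ((hasDerivAt_id x).const_mul 2).sub_const g
        exact h2.div_const g
      have harc := (Real.hasDerivAt_arcsin hnem1 hne1).comp x hinner
      have hval : 1 / Real.sqrt (1 - ((2*x - g)/g)^2) * (2/g)
          = 1 / Real.sqrt (x*(g-x)) := by
        have h1 : 1 - ((2*x - g)/g)^2 = (2/g)^2 * (x*(g-x)) := by
          field_simp; ring
        have hxp : (0:ℝ) < Real.sqrt (x*(g-x)) :=
          Real.sqrt_pos.mpr (mul_pos hx0 (by linarith))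
        have hgx : (0:ℝ) < g - x := by linarith
        rw [h1, Real.sqrt_mul (sq_nonneg _), Real.sqrt_sq (by positivity : (0:ℝ) ≤ 2/g)]
        rw [div_mul_eq_mul_div, div_mul_eq_mul_div, div_eq_div_iff (by positivity) (by positivity)]
        ring
      rw [← hval]
      exact harc
    have hcont : ContinuousOn f (Set.Icc ((μ:ℝ)) ((μ:ℝ)+1)) :=
      (Real.continuous_arcsin.comp
        (((continuous_const.mul continuous_id').sub continuous_const).div_const g)).continuousOn
    obtain ⟨c, hc, hcs⟩ := exists_hasDerivAt_eq_slope f _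
      (by linarith : (μ:ℝ) < (μ:ℝ)+1) hcont hderiv
    have hc0 : 0 < c := lt_of_le_of_lt hμ0 hc.1
    have hcg : c < g := lt_of_lt_of_le hc.2 hμγ
    have hslope : f ((μ:ℝ)+1) - f (μ:ℝ) = 1 / Real.sqrt (c*(g-c)) := by
      have h1 : ((μ:ℝ) + 1 - (μ:ℝ)) = 1 := by ring
      rw [h1, div_one] at hcs
      exact hcs.symm
    rw [hslope, ← Real.sqrt_mul (by linarith : (0:ℝ) ≤ (μ:ℝ)+1)]
    have hle : c*(g-c) ≤ ((μ:ℝ)+1)*(g-(μ:ℝ)) := by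
      rcases le_or_gt c (g - (μ:ℝ)) with h | h
      · nlinarith [hc.1, hc.2]
      · nlinarith [hc.1, hc.2]
    have hcpos : (0:ℝ) < c*(g-c) := mul_pos hc0 (by linarith)
    exact one_div_le_one_div_of_le (Real.sqrt_pos.mpr hcpos) (Real.sqrt_le_sqrt hle)
  calc ∑ μ ∈ Finset.range γ, 1 / (Real.sqrt ((μ:ℝ)+1) * Real.sqrt (g - (μ:ℝ)))
      ≤ ∑ μ ∈ Finset.range γ, (f ((μ:ℝ)+1) - f (μ:ℝ)) := Finset.sum_le_sum key
    _ = ∑ μ ∈ Finset.range γ, ((fun n : ℕ => f n) (μ+1) - (fun n : ℕ => f n) μ) := by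
        simp [Nat.cast_add, Nat.cast_one]
    _ = f (γ:ℝ) - f 0 := by rw [Finset.sum_range_sub (fun n : ℕ => f n)]; norm_num
    _ = Real.pi := by
        have h1 : (2*g - g)/g = 1 := by field_simp; ring
        have h2 : (2*0 - g)/g = -1 := by field_simp; ring
        simp only [hf, ← hg, h1, h2, Real.arcsin_one, Real.arcsin_neg, Real.arcsin_one]
        ring
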